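/- Let R be a ring and (𝒯, ℱ) a torsion pair in R-Mod (Hom(T,F)=0 for T ∈ 𝒯, F ∈ ℱ, both classes maximal with this property, and every module M fits in an exact sequence 0 → tM → M → M/tM → 0 with tM ∈ 𝒯 and M/tM ∈ ℱ). Let B ≠ 0 be a module satisfying: (1) B ∈ ℱ; (2) every nonzero morphism from B to a module of ℱ is injective. Then the following are equivalent: (3) for every short exact sequence 0 → B → F → M → 0 with F ∈ ℱ, also M ∈ ℱ; (3') for every non-split short exact sequence 0 → B → M → T → 0 with T ∈ 𝒯, also M ∈ 𝒯. -/

import Mathlib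

universe u v
variable {R : Type u} [Ring R]

/-- A torsion pair in `R`-Mod: `Hom(𝒯, ℱ) = 0` and both classes are maximal with
this property. -/
def IsTorsionPair (R : Type u) [Ring R] (𝒯 ℱ : Set (ModuleCat.{v} R)) : Prop :=
  (∀ T ∈ 𝒯, ∀ F ∈ ℱ, ∀ f : ↑T →ₗ[R] ↑F, f = 0) ∧
  (∀ M : ModuleCat.{v} R, (∀ F ∈ ℱ, ∀ f : ↑M →ₗ[R] ↑F, f = 0) → M ∈ 𝒯) ∧
  (∀ M : ModuleCat.{v} R, (∀ T ∈ 𝒯, ∀ f : ↑T →ₗ[R] ↑M, f = 0) → M ∈ ℱ)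

/-- Every module has a torsion submodule, lying in `𝒯`, with quotient in `ℱ`. -/
def HasTorsionRadical (R : Type u) [Ring R] (𝒯 ℱ : Set (ModuleCat.{v} R)) : Prop :=
  ∀ M : ModuleCat.{v} R, ∃ tM : Submodule R ↑M,
    ModuleCat.of R tM ∈ 𝒯 ∧ ModuleCat.of R (↑M ⧸ tM) ∈ ℱ

section Helpers

variable {𝒯 ℱ : Set (ModuleCat.{v} R)}

/-- `𝒯` is closed under epimorphic images. -/
lemma tp_torsion_of_surj (htp : IsTorsionPair R 𝒯 ℱ) {T M : ModuleCat.{v} R}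
    (hT : T ∈ 𝒯) (g : ↑T →ₗ[R] ↑M) (hg : Function.Surjective g) : M ∈ 𝒯 := by
  refine htp.2.1 M (fun F hF f => ?_)
  have h0 : f ∘ₗ g = 0 := htp.1 T hT F hF _
  ext x
  obtain ⟨y, rfl⟩ := hg x
  exact congrFun (congrArg DFunLike.coe h0) y

/-- `ℱ` is closed under submodules. -/
lemma tp_free_of_inj (htp : IsTorsionPair R 𝒯 ℱ) {F M : ModuleCat.{v} R}
    (hF : F ∈ ℱ) (g : ↑M →ₗ[R] ↑F) (hg : Function.Injective g) : M ∈ ℱ := by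
  refine htp.2.2 M (fun T hT f => ?_)
  have h0 : g ∘ₗ f = 0 := htp.1 T hT F hF _
  ext x
  apply hg
  have := congrFun (congrArg DFunLike.coe h0) x
  simpa using this

/-- A module in both classes is trivial. -/
lemma tp_subsingleton_of_mem_both (htp : IsTorsionPair R 𝒯 ℱ) {M : ModuleCat.{v} R}
    (hT : M ∈ 𝒯) (hF : M ∈ ℱ) : Subsingleton ↑M := by
  have h := htp.1 M hT M hF LinearMap.id
  refine ⟨fun a b => ?_⟩
  have ha := congrFun (congrArg DFunLike.coe h) a
  have hb := congrFun (congrArg DFunLike.coe h) b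
  simp only [LinearMap.id_apply, LinearMap.zero_apply] at ha hb
  rw [ha, hb]

end Helpers

/-- For a nonzero torsionfree module `B` all of whose nonzero maps to torsionfree
modules are injective, condition (3) (quotients of torsionfree overmodules of `B`
by `B` are torsionfree) is equivalent to condition (3') (middle terms of non-split
extensions of torsion modules by `B` are torsion). -/
theorem stmt_4 (𝒯 ℱ : Set (ModuleCat.{v} R)) (htp : IsTorsionPair R 𝒯 ℱ)
    (hrad : HasTorsionRadical R 𝒯 ℱ)
    (B : ModuleCat.{v} R) (hB0 : Nontrivial ↑B) (hBF : B ∈ ℱ)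
    (hB2 : ∀ F ∈ ℱ, ∀ f : ↑B →ₗ[R] ↑F, f ≠ 0 → Function.Injective f) :
    ((∀ F ∈ ℱ, ∀ M : ModuleCat.{v} R, ∀ (i : ↑B →ₗ[R] ↑F) (p : ↑F →ₗ[R] ↑M),
        Function.Injective i → Function.Surjective p →
        LinearMap.range i = LinearMap.ker p → M ∈ ℱ)
      ↔
     (∀ T ∈ 𝒯, ∀ M : ModuleCat.{v} R, ∀ (i : ↑B →ₗ[R] ↑M) (p : ↑M →ₗ[R] ↑T),
        Function.Injective i → Function.Surjective p →
        LinearMap.range i = LinearMap.ker p →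
        (¬ ∃ s : ↑T →ₗ[R] ↑M, p ∘ₗ s = LinearMap.id) → M ∈ 𝒯)) := by
  constructor
  · -- (3) → (3')
    intro h3 T hT M i p hi hp hker hnosplit
    obtain ⟨tM, htMT, htMF⟩ := hrad M
    set q : ↑M →ₗ[R] (↑M ⧸ tM) := tM.mkQ with hq
    set f : ↑B →ₗ[R] (↑M ⧸ tM) := q ∘ₗ i with hfdef
    by_cases hf : f = 0
    · -- case 1 : ker p = range i ≤ tM, so M/tM is a quotient of T, hence torsion
      have hle : LinearMap.ker p ≤ tM := by
        rw [← hker]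
        rintro x ⟨b, rfl⟩
        have : q (i b) = 0 := congrFun (congrArg DFunLike.coe hf) b
        rwa [← Submodule.ker_mkQ tM, LinearMap.mem_ker]
      -- surjection from T onto M/tM
      have hle' : LinearMap.ker p ≤ LinearMap.ker q := by
        rwa [Submodule.ker_mkQ]
      let g : (↑M ⧸ LinearMap.ker p) →ₗ[R] (↑M ⧸ tM) :=
        Submodule.liftQ (LinearMap.ker p) q hle'
      let e := p.quotKerEquivOfSurjective hp
      have hgsurj : Function.Surjective (g ∘ₗ (e.symm : ↑T →ₗ[R] (↑M ⧸ LinearMap.ker p))) := by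
        intro y
        obtain ⟨m, hm⟩ := Submodule.mkQ_surjective tM y
        refine ⟨e ((LinearMap.ker p).mkQ m), ?_⟩
        simp only [LinearMap.coe_comp, Function.comp_apply, LinearEquiv.coe_coe,
          LinearEquiv.symm_apply_apply]
        rw [show g ((LinearMap.ker p).mkQ m) = q m from Submodule.liftQ_apply _ _ _]
        exact hm
      have hquotT : ModuleCat.of R (↑M ⧸ tM) ∈ 𝒯 :=
        tp_torsion_of_surj htp hT _ hgsurj
      have : Subsingleton (↑M ⧸ tM) :=
        tp_subsingleton_of_mem_both htp hquotT htMF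
      have htop : tM = ⊤ := Submodule.Quotient.subsingleton_iff.mp this
      -- M ≅ tM ∈ 𝒯
      refine tp_torsion_of_surj htp htMT (tM.subtype) ?_
      intro x
      exact ⟨⟨x, htop ▸ Submodule.mem_top⟩, rfl⟩
    · -- case 2 : f : B → M/tM is injective; derive a splitting, contradiction
      exfalso
      have hfinj : Function.Injective f := hB2 (ModuleCat.of R (↑M ⧸ tM)) htMF f hf
      set J : Submodule R ↑M := tM ⊔ LinearMap.range i with hJ
      have htMJ : tM ≤ LinearMap.ker J.mkQ := by
        rw [Submodule.ker_mkQ]; exact le_sup_left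
      let p' : (↑M ⧸ tM) →ₗ[R] (↑M ⧸ J) := Submodule.liftQ tM J.mkQ htMJ
      have hp'surj : Function.Surjective p' := by
        intro y
        obtain ⟨m, hm⟩ := Submodule.mkQ_surjective J y
        refine ⟨tM.mkQ m, ?_⟩
        rw [show p' (tM.mkQ m) = J.mkQ m from Submodule.liftQ_apply _ _ _]
        exact hm
      have hkerp' : LinearMap.range f = LinearMap.ker p' := by
        rw [hfdef, LinearMap.range_comp, Submodule.ker_liftQ, Submodule.ker_mkQ, hJ,
          Submodule.map_sup, Submodule.mkQ_map_self, bot_sup_eq]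
      -- apply (3)
      have hCF : ModuleCat.of R (↑M ⧸ J) ∈ ℱ :=
        h3 (ModuleCat.of R (↑M ⧸ tM)) htMF (ModuleCat.of R (↑M ⧸ J)) f p' hfinj hp'surj hkerp'
      -- M/J is a quotient of T, hence torsion
      have hle2 : LinearMap.ker p ≤ LinearMap.ker J.mkQ := by
        rw [Submodule.ker_mkQ, ← hker]; exact le_sup_right
      let g2 : (↑M ⧸ LinearMap.ker p) →ₗ[R] (↑M ⧸ J) :=
        Submodule.liftQ (LinearMap.ker p) J.mkQ hle2
      let e := p.quotKerEquivOfSurjective hp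
      have hg2surj : Function.Surjective (g2 ∘ₗ (e.symm : ↑T →ₗ[R] (↑M ⧸ LinearMap.ker p))) := by
        intro y
        obtain ⟨m, hm⟩ := Submodule.mkQ_surjective J y
        refine ⟨e ((LinearMap.ker p).mkQ m), ?_⟩
        simp only [LinearMap.coe_comp, Function.comp_apply, LinearEquiv.coe_coe,
          LinearEquiv.symm_apply_apply]
        rw [show g2 ((LinearMap.ker p).mkQ m) = J.mkQ m from Submodule.liftQ_apply _ _ _]
        exact hm
      have hCT : ModuleCat.of R (↑M ⧸ J) ∈ 𝒯 := tp_torsion_of_surj htp hT _ hg2surj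
      have hCsub : Subsingleton (↑M ⧸ J) := tp_subsingleton_of_mem_both htp hCT hCF
      have hJtop : J = ⊤ := Submodule.Quotient.subsingleton_iff.mp hCsub
      -- tM ∩ range i = 0
      have hdisj : ∀ x : ↑M, x ∈ tM → x ∈ LinearMap.range i → x = 0 := by
        rintro x hx ⟨b, rfl⟩
        have : f b = 0 := by
          show q (i b) = 0
          rwa [← Submodule.ker_mkQ tM, LinearMap.mem_ker] at hx
        rw [show b = 0 from hfinj (by rw [this, map_zero]), map_zero]
      -- p restricted to tM is bijective
      let p₁ : tM →ₗ[R] ↑T := p ∘ₗ tM.subtype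
      have hp₁inj : Function.Injective p₁ := by
        rw [← LinearMap.ker_eq_bot]
        rw [Submodule.eq_bot_iff]
        rintro ⟨x, hx⟩ hker₁
        have hx0 : x ∈ LinearMap.ker p := hker₁
        rw [← hker] at hx0
        exact Subtype.ext (hdisj x hx hx0)
      have hp₁surj : Function.Surjective p₁ := by
        intro t
        obtain ⟨m, hm⟩ := hp t
        have hmJ : m ∈ J := hJtop ▸ Submodule.mem_top
        obtain ⟨y, hy, z, hz, hyz⟩ := Submodule.mem_sup.mp hmJ
        refine ⟨⟨y, hy⟩, ?_⟩
        have hz0 : p z = 0 := by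
          rw [hker] at hz; exact hz
        show p y = t
        have : p (y + z) = t := by rw [hyz]; exact hm
        rwa [map_add, hz0, add_zero] at this
      let e' : tM ≃ₗ[R] ↑T := LinearEquiv.ofBijective p₁ ⟨hp₁inj, hp₁surj⟩
      refine hnosplit ⟨tM.subtype ∘ₗ (e'.symm : ↑T →ₗ[R] tM), ?_⟩
      ext t
      simp only [LinearMap.coe_comp, Function.comp_apply, LinearEquiv.coe_coe,
        LinearMap.id_apply]
      show p ((e'.symm t : tM) : ↑M) = t
      exact e'.apply_symm_apply t
  · -- (3') → (3)
    intro h3' F hF M i p hi hp hker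
    obtain ⟨t, htT, htF⟩ := hrad M
    set N : Submodule R ↑F := t.comap p with hN
    have hNF : ModuleCat.of R N ∈ ℱ :=
      tp_free_of_inj htp hF N.subtype (Submodule.injective_subtype N)
    have hiN : ∀ b : ↑B, i b ∈ N := by
      intro b
      have : i b ∈ LinearMap.ker p := hker ▸ LinearMap.mem_range_self i b
      rw [LinearMap.mem_ker] at this
      show p (i b) ∈ t
      rw [this]; exact t.zero_mem
    let i' : ↑B →ₗ[R] N := i.codRestrict N hiN
    have hi'inj : Function.Injective i' := by
      intro a b hab
      exact hi (congrArg Subtype.val hab)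
    let p' : N →ₗ[R] t := (p ∘ₗ N.subtype).codRestrict t (fun x => x.2)
    have hp'surj : Function.Surjective p' := by
      rintro ⟨y, hy⟩
      obtain ⟨m, hm⟩ := hp y
      have hmN : m ∈ N := by show p m ∈ t; rw [hm]; exact hy
      exact ⟨⟨m, hmN⟩, Subtype.ext hm⟩
    have hker' : LinearMap.range i' = LinearMap.ker p' := by
      ext x
      constructor
      · rintro ⟨b, rfl⟩
        have : p (i b) = 0 := by
          have : i b ∈ LinearMap.ker p := hker ▸ LinearMap.mem_range_self i b
          rwa [LinearMap.mem_ker] at this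
        exact Subtype.ext this
      · intro hx
        have hx' : p (x : ↑F) = 0 := congrArg Subtype.val hx
        have : (x : ↑F) ∈ LinearMap.range i := by
          rw [hker, LinearMap.mem_ker]; exact hx'
        obtain ⟨b, hb⟩ := this
        exact ⟨b, Subtype.ext hb⟩
    by_cases hs : ∃ s : ↑(ModuleCat.of R t) →ₗ[R] ↑(ModuleCat.of R N), p' ∘ₗ s = LinearMap.id
    · -- the sequence splits: then t embeds in F, so t = 0, so M ≅ M/t ∈ ℱ
      obtain ⟨s, hsplit⟩ := hs
      have hj : N.subtype ∘ₗ s = 0 :=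
        htp.1 (ModuleCat.of R t) htT F hF (N.subtype ∘ₗ s)
      have ht0 : ∀ x : t, x = 0 := by
        intro x
        have h1 : N.subtype (s x) = 0 := congrFun (congrArg DFunLike.coe hj) x
        have h2 : s x = 0 := Submodule.injective_subtype N (by simpa using h1)
        have h3 : p' (s x) = x := congrFun (congrArg DFunLike.coe hsplit) x
        rw [h2, map_zero] at h3
        exact h3.symm
      have htbot : t = ⊥ := by
        rw [Submodule.eq_bot_iff]
        intro x hx
        exact congrArg Subtype.val (ht0 ⟨x, hx⟩)
      refine tp_free_of_inj htp htF t.mkQ ?_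
      rw [← LinearMap.ker_eq_bot, Submodule.ker_mkQ]
      exact htbot
    · -- non-split: by (3'), N ∈ 𝒯 ∩ ℱ, so N = 0, contradicting B ↪ N, B ≠ 0
      exfalso
      have hNT : ModuleCat.of R N ∈ 𝒯 :=
        h3' (ModuleCat.of R t) htT (ModuleCat.of R N) i' p' hi'inj hp'surj hker' hs
      have : Subsingleton N := tp_subsingleton_of_mem_both htp hNT hNF
      obtain ⟨a, b, hab⟩ := hB0
      exact hab (hi'inj (Subsingleton.elim _ _))
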